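/- Let Mac(k,d) denote the Macaulay matrix construction with the Koszul F5 criterion: rows are a row-echelon basis of ⟨F₁,…,F_{k−1}⟩_d together with {x^(β,d−d_k)·F_k : x^(β,d−d_k) ∈ K[S_Δ^h]_{d−d_k} not a leading monomial of ⟨F₁,…,F_{k−1}⟩_{d−d_k}}. Then the row space of Mac(k,d) equals the full degree-d component ⟨F₁,…,F_k⟩_d of the ideal. -/

import Mathlib

/-- `m` is the leading monomial of `f` with respect to the monomial order `lt`. -/
def IsLM {K : Type} [Field K] {M : Type} [AddCommMonoid M]
    (lt : M → M → Prop) (f : AddMonoidAlgebra K M) (m : M) : Prop :=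
  m ∈ f.coeff.support ∧ ∀ m' ∈ f.coeff.support, m' = m ∨ lt m' m

section Aux

variable {K : Type} [Field K] {M : Type} [AddCommMonoid M]

open AddMonoidAlgebra in
/-- Expand a product as a sum over the support of the left factor. -/
lemma natPiPWO (σ : Type) [Finite σ] (s : Set (σ → ℕ)) : s.IsPWO :=
  Set.isPWO_of_wellQuasiOrderedLE s

open AddMonoidAlgebra in
/-- Expand a product as a sum over the support of the left factor. -/
lemma mulExpand (f G : AddMonoidAlgebra K M) :
    f * G = ∑ p ∈ f.coeff.support, AddMonoidAlgebra.single p (f.coeff p) * G := by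
  rw [← Finset.sum_mul]
  congr 1
  exact (AddMonoidAlgebra.sum_coeff_single f).symm

lemma mulExpandSmul (f G : AddMonoidAlgebra K M) :
    f * G = ∑ p ∈ f.coeff.support, f.coeff p • (AddMonoidAlgebra.single p (1 : K) * G) := by
  rw [mulExpand f G]
  refine Finset.sum_congr rfl fun p _ => ?_
  have h : AddMonoidAlgebra.single p (f.coeff p) = f.coeff p • AddMonoidAlgebra.single p (1 : K) := by
    rw [AddMonoidAlgebra.smul_single', mul_one]
  rw [h, smul_mul_assoc]

end Aux

/-- correctness of the F5-pruned Macaulay matrix. The span of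
⟨F₁,…,F_{k−1}⟩_d together with the products x^(β,d−d_k)·F_k over monomials x^(β,d−d_k)
of K[S_Δ^h]_{d−d_k} that are not leading monomials of ⟨F₁,…,F_{k−1}⟩_{d−d_k} equals the
full degree-d component ⟨F₁,…,F_k⟩_d of the ideal. -/
theorem stmt19 (K : Type) [Field K] (n r k : ℕ)
    (S : AddSubmonoid ((Fin n → ℤ) × (Fin r → ℕ))) (hSfg : S.FG)
    (lt : ((Fin n → ℤ) × (Fin r → ℕ)) → ((Fin n → ℤ) × (Fin r → ℕ)) → Prop)
    (htotal : ∀ a ∈ S, ∀ b ∈ S, a = b ∨ lt a b ∨ lt b a)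
    (hirrefl : ∀ a, ¬ lt a a)
    (htrans : ∀ a b c, lt a b → lt b c → lt a c)
    (hmin : ∀ a ∈ S, a ≠ (0 : ((Fin n → ℤ) × (Fin r → ℕ))) → lt 0 a)
    (hadd : ∀ a ∈ S, ∀ b ∈ S, ∀ c ∈ S, lt a b → lt (a + c) (b + c))
    -- F₁, …, F_k, the last one being F_k
    (F : Fin (k + 1) → AddMonoidAlgebra K ((Fin n → ℤ) × (Fin r → ℕ)))
    (dF : Fin (k + 1) → (Fin r → ℕ))
    (hFhom : ∀ i, ∀ p ∈ (F i).coeff.support, p.2 = dF i)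
    (hFS : ∀ i, ∀ p ∈ (F i).coeff.support, p ∈ S)
    (e d : Fin r → ℕ) (hd : d = e + dF (Fin.last k))
    -- the degree-c graded component of the ideal ⟨F₁,…,F_{k−1}⟩ in K[S_Δ^h]
    (Comp : (Fin r → ℕ) → Set (AddMonoidAlgebra K ((Fin n → ℤ) × (Fin r → ℕ))))
    (hComp : ∀ c, Comp c = {g | (∀ p ∈ g.coeff.support, p.2 = c) ∧
      ∃ H : Fin k → AddMonoidAlgebra K ((Fin n → ℤ) × (Fin r → ℕ)),
        (∀ i, ∀ p ∈ (H i).coeff.support, p ∈ S) ∧ g = ∑ i : Fin k, H i * F i.castSucc}) :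
    Submodule.span K
        (Comp d ∪
          {g | ∃ β : Fin n → ℤ, (β, e) ∈ S ∧
            (¬ ∃ G ∈ Comp e, G ≠ 0 ∧ IsLM lt G ((β, e) : (Fin n → ℤ) × (Fin r → ℕ))) ∧
            g = AddMonoidAlgebra.single ((β, e) : (Fin n → ℤ) × (Fin r → ℕ)) (1 : K) *
              F (Fin.last k)}) =
      Submodule.span K
        {g : AddMonoidAlgebra K ((Fin n → ℤ) × (Fin r → ℕ)) |
          (∀ p ∈ g.coeff.support, p.2 = d) ∧
          ∃ H : Fin (k + 1) → AddMonoidAlgebra K ((Fin n → ℤ) × (Fin r → ℕ)),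
            (∀ i, ∀ p ∈ (H i).coeff.support, p ∈ S) ∧ g = ∑ i, H i * F i} := by
  classical
  haveI : IsStrictOrder ((Fin n → ℤ) × (Fin r → ℕ)) lt :=
    { irrefl := hirrefl, trans := htrans }
  -- homogeneity of products
  have hmulhom : ∀ (f G : AddMonoidAlgebra K ((Fin n → ℤ) × (Fin r → ℕ))) (c1 c2 : Fin r → ℕ),
      (∀ p ∈ f.coeff.support, p.2 = c1) → (∀ p ∈ G.coeff.support, p.2 = c2) →
      ∀ q ∈ (f * G).coeff.support, q.2 = c1 + c2 := by
    intro f G c1 c2 hf hG q hq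
    obtain ⟨a, ha, b, hb, rfl⟩ := Finset.mem_add.1 (AddMonoidAlgebra.support_coeff_mul_subset f G hq)
    have : (a + b).2 = a.2 + b.2 := rfl
    rw [this, hf a ha, hG b hb]
  -- supports of products stay in S
  have hmulS : ∀ (f G : AddMonoidAlgebra K ((Fin n → ℤ) × (Fin r → ℕ))), (∀ p ∈ f.coeff.support, p ∈ S) → (∀ p ∈ G.coeff.support, p ∈ S) →
      ∀ q ∈ (f * G).coeff.support, q ∈ S := by
    intro f G hf hG q hq
    obtain ⟨a, ha, b, hb, rfl⟩ := Finset.mem_add.1 (AddMonoidAlgebra.support_coeff_mul_subset f G hq)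
    exact S.add_mem (hf a ha) (hG b hb)
  -- supports of sums of products stay in S
  have hsumS : ∀ (N : ℕ) (H G : Fin N → AddMonoidAlgebra K ((Fin n → ℤ) × (Fin r → ℕ))),
      (∀ i, ∀ p ∈ (H i).coeff.support, p ∈ S) → (∀ i, ∀ p ∈ (G i).coeff.support, p ∈ S) →
      ∀ q ∈ (∑ i, H i * G i).coeff.support, q ∈ S := by
    intro N H G hH hG q hq
    rw [AddMonoidAlgebra.coeff_sum] at hq
    obtain ⟨i, -, hi⟩ := Finsupp.mem_support_finset_sum q hq
    exact hmulS _ _ (hH i) (hG i) q hi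
  -- well-foundedness of lt on S (Dickson's lemma)
  have hwfS : (S : Set ((Fin n → ℤ) × (Fin r → ℕ))).WellFoundedOn lt := by
    rw [Set.wellFoundedOn_iff_no_descending_seq]
    intro f hf
    obtain ⟨T, hT⟩ := hSfg
    have hrep : ∀ m : ℕ, ∃ v : ((Fin n → ℤ) × (Fin r → ℕ)) → ℕ, ∑ t ∈ T, v t • t = f m := by
      intro m
      have h1 : (f m : ((Fin n → ℤ) × (Fin r → ℕ))) ∈ Submodule.span ℕ (↑T : Set ((Fin n → ℤ) × (Fin r → ℕ))) := by
        have h2 := hf m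
        rw [← hT, ← Submodule.span_nat_eq_addSubmonoidClosure] at h2
        exact h2
      exact (Submodule.mem_span_finset.1 h1).imp fun _ h => h.2
    choose v hv using hrep
    have hpwo : (Set.univ : Set (↥T → ℕ)).IsPWO := natPiPWO ↥T _
    obtain ⟨i, j, hij, hle⟩ :=
      hpwo.exists_lt (f := fun m => fun t : ↥T => v m ↑t) (fun _ => Set.mem_univ _)
    have hTS : ∀ t ∈ T, t ∈ S := fun t ht => by
      rw [← hT]; exact AddSubmonoid.subset_closure ht
    set s : ((Fin n → ℤ) × (Fin r → ℕ)) := ∑ t ∈ T, (v j t - v i t) • t with hs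
    have hsS : s ∈ S := by
      refine AddSubmonoid.sum_mem S fun t ht => AddSubmonoid.nsmul_mem S (hTS t ht) _
    have hij2 : f i + s = f j := by
      rw [← hv i, ← hv j, hs, ← Finset.sum_add_distrib]
      refine Finset.sum_congr rfl fun t ht => ?_
      rw [← add_nsmul]
      congr 1
      exact Nat.add_sub_cancel' (hle ⟨t, ht⟩)
    have hji : lt (f j) (f i) := f.map_rel_iff.2 hij
    by_cases hs0 : s = 0
    · rw [hs0, add_zero] at hij2
      rw [← hij2] at hji
      exact hirrefl _ hji
    · have h0s : lt 0 s := hmin s hsS hs0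
      have h1 : lt (0 + f i) (s + f i) :=
        hadd 0 (AddSubmonoid.zero_mem S) s hsS (f i) (hf i) h0s
      rw [zero_add, add_comm] at h1
      rw [hij2] at h1
      exact hirrefl _ (htrans _ _ _ h1 hji)
  -- the target span (left-hand side)
  set LHS : Set (AddMonoidAlgebra K ((Fin n → ℤ) × (Fin r → ℕ))) := (Comp d ∪
      {g | ∃ β : Fin n → ℤ, (β, e) ∈ S ∧
        (¬ ∃ G ∈ Comp e, G ≠ 0 ∧ IsLM lt G ((β, e) : ((Fin n → ℤ) × (Fin r → ℕ)))) ∧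
        g = AddMonoidAlgebra.single ((β, e) : ((Fin n → ℤ) × (Fin r → ℕ))) (1 : K) * F (Fin.last k)}) with hLHS
  set T' : Submodule K (AddMonoidAlgebra K ((Fin n → ℤ) × (Fin r → ℕ))) := Submodule.span K LHS with hT'
  -- members of Comp c are homogeneous with support in S
  have hCompS : ∀ (c : Fin r → ℕ), ∀ G ∈ Comp c, (∀ p ∈ G.coeff.support, p.2 = c) ∧
      (∀ p ∈ G.coeff.support, p ∈ S) := by
    intro c G hG
    rw [hComp] at hG
    obtain ⟨hhom, H, hHS, rfl⟩ := hG
    exact ⟨hhom, hsumS k H (fun i => F i.castSucc) hHS (fun i => hFS i.castSucc)⟩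
  -- product of a member of Comp e with F_last belongs to Comp d
  have hCompMul : ∀ G ∈ Comp e, G * F (Fin.last k) ∈ Comp d := by
    intro G hG
    have hGhom := (hCompS e G hG).1
    rw [hComp] at hG ⊢
    obtain ⟨hhom, H, hHS, rfl⟩ := hG
    refine ⟨by
      intro q hq
      rw [hd]
      exact hmulhom _ _ e (dF (Fin.last k)) hGhom (hFhom (Fin.last k)) q hq,
      fun i => H i * F (Fin.last k), ?_, ?_⟩
    · intro i p hp
      exact hmulS _ _ (hHS i) (hFS (Fin.last k)) p hp
    · rw [Finset.sum_mul]
      refine Finset.sum_congr rfl fun i _ => ?_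
      rw [mul_right_comm]
  -- the key lemma: every monomial of degree e times F_last is in the span
  have key : ∀ m : ((Fin n → ℤ) × (Fin r → ℕ)), m ∈ S → m.2 = e →
      AddMonoidAlgebra.single m (1 : K) * F (Fin.last k) ∈ T' := by
    have hwfB : ({m : ((Fin n → ℤ) × (Fin r → ℕ)) | m ∈ S ∧ m.2 = e} : Set ((Fin n → ℤ) × (Fin r → ℕ))).WellFoundedOn lt :=
      hwfS.subset fun m hm => hm.1
    intro m hmS hme
    refine Set.WellFoundedOn.induction (P := fun m =>
        AddMonoidAlgebra.single m (1 : K) * F (Fin.last k) ∈ T') hwfB (⟨hmS, hme⟩ :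
      m ∈ {m : ((Fin n → ℤ) × (Fin r → ℕ)) | m ∈ S ∧ m.2 = e}) ?_
    intro y hy IH
    by_cases hLM : ∃ G ∈ Comp e, G ≠ 0 ∧ IsLM lt G y
    · obtain ⟨G, hG, hG0, hyG, hmax⟩ := hLM
      have hGS := (hCompS e G hG).2
      have hGhom := (hCompS e G hG).1
      set c : K := G.coeff y with hc
      have hc0 : c ≠ 0 := Finsupp.mem_support_iff.1 hyG
      set R : AddMonoidAlgebra K ((Fin n → ℤ) × (Fin r → ℕ)) := c⁻¹ • G - AddMonoidAlgebra.single y (1 : K) with hR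
      have hdec : c⁻¹ • G = AddMonoidAlgebra.single y (1 : K) + R := by
        rw [hR, add_sub_cancel]
      have hRy : R.coeff y = 0 := by
        rw [hR, AddMonoidAlgebra.coeff_sub, Finsupp.sub_apply, AddMonoidAlgebra.coeff_smul,
          Finsupp.smul_apply, AddMonoidAlgebra.coeff_single, Finsupp.single_eq_same, ← hc,
          smul_eq_mul, inv_mul_cancel₀ hc0, sub_self]
      have hRsupp : ∀ p ∈ R.coeff.support, p ∈ G.coeff.support ∧ p ≠ y := by
        intro p hp
        have hp0 : R.coeff p ≠ 0 := Finsupp.mem_support_iff.1 hp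
        have hpy : p ≠ y := fun h => hp0 (h ▸ hRy)
        refine ⟨?_, hpy⟩
        have := Finsupp.support_sub (f := (c⁻¹ • G).coeff)
          (g := (AddMonoidAlgebra.single y (1 : K)).coeff) hp
        rcases Finset.mem_union.1 this with h | h
        · exact Finsupp.support_smul h
        · exact absurd (Finset.mem_singleton.1 (Finsupp.support_single_subset h)) hpy
      have hRF : R * F (Fin.last k) ∈ T' := by
        rw [mulExpandSmul]
        refine Submodule.sum_mem _ fun p hp => Submodule.smul_mem _ _ ?_
        obtain ⟨hpG, hpy⟩ := hRsupp p hp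
        have hplt : lt p y := by
          rcases hmax p hpG with h | h
          · exact absurd h hpy
          · exact h
        exact IH p ⟨hGS p hpG, hGhom p hpG⟩ hplt
      have hGF : G * F (Fin.last k) ∈ T' :=
        Submodule.subset_span (Or.inl (hCompMul G hG))
      have heq : AddMonoidAlgebra.single y (1 : K) * F (Fin.last k) =
          c⁻¹ • (G * F (Fin.last k)) - R * F (Fin.last k) := by
        rw [← smul_mul_assoc, hdec, add_mul, add_sub_cancel_right]
      rw [heq]
      exact Submodule.sub_mem _ (Submodule.smul_mem _ _ hGF) hRF
    · refine Submodule.subset_span (Or.inr ?_)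
      refine ⟨y.1, ?_, ?_, ?_⟩
      · have : (y.1, e) = y := by rw [← hy.2]
        rw [this]; exact hy.1
      · have : (y.1, e) = y := by rw [← hy.2]
        rw [this]; exact hLM
      · have : (y.1, e) = y := by rw [← hy.2]
        rw [this]
  -- now both inclusions
  apply le_antisymm
  · rw [Submodule.span_le]
    rintro g (hg | ⟨β, hβS, -, rfl⟩)
    · rw [hComp] at hg
      obtain ⟨hhom, H, hHS, rfl⟩ := hg
      refine Submodule.subset_span ⟨hhom, Fin.snoc H 0, ?_, ?_⟩
      · intro i
        refine Fin.lastCases ?_ (fun j => ?_) i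
        · intro p hp
          rw [Fin.snoc_last] at hp
          simp at hp
        · intro p hp
          rw [Fin.snoc_castSucc] at hp
          exact hHS j p hp
      · rw [Fin.sum_univ_castSucc]
        simp [Fin.snoc_castSucc, Fin.snoc_last]
    · refine Submodule.subset_span ⟨?_, Fin.snoc 0 (AddMonoidAlgebra.single ((β, e) : ((Fin n → ℤ) × (Fin r → ℕ))) (1 : K)), ?_, ?_⟩
      · intro p hp
        rw [hd]
        refine hmulhom _ _ e (dF (Fin.last k)) ?_ (hFhom (Fin.last k)) p hp
        intro q hq
        have := Finsupp.support_single_subset hq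
        rw [Finset.mem_singleton] at this
        rw [this]
      · intro i
        refine Fin.lastCases ?_ (fun j => ?_) i
        · intro p hp
          rw [Fin.snoc_last] at hp
          have := Finsupp.support_single_subset hp
          rw [Finset.mem_singleton] at this
          rw [this]; exact hβS
        · intro p hp
          rw [Fin.snoc_castSucc] at hp
          simp at hp
      · rw [Fin.sum_univ_castSucc]
        simp [Fin.snoc_castSucc, Fin.snoc_last]
  · rw [Submodule.span_le]
    rintro g ⟨hhom, H, hHS, rfl⟩
    -- replace H by its relevant homogeneous components
    set H' : Fin (k + 1) → AddMonoidAlgebra K ((Fin n → ℤ) × (Fin r → ℕ)) :=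
      fun i => AddMonoidAlgebra.ofCoeff
          (Finsupp.filter (fun p : ((Fin n → ℤ) × (Fin r → ℕ)) => p.2 + dF i = d) (H i).coeff) with hH'
    have hH'S : ∀ i, ∀ p ∈ (H' i).coeff.support, p ∈ S := by
      intro i p hp
      rw [hH', AddMonoidAlgebra.coeff_ofCoeff, Finsupp.support_filter, Finset.mem_filter] at hp
      exact hHS i p hp.1
    have hgeq : ∑ i, H i * F i = ∑ i, H' i * F i := by
      rw [← AddMonoidAlgebra.coeff_inj]
      have hfix : Finsupp.filter (fun p : ((Fin n → ℤ) × (Fin r → ℕ)) => p.2 = d) (∑ i, H i * F i).coeff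
          = (∑ i, H i * F i).coeff := by
        rw [Finsupp.filter_eq_self_iff]
        intro p hp
        exact hhom p (Finsupp.mem_support_iff.2 hp)
      rw [← hfix]
      simp only [AddMonoidAlgebra.coeff_sum]
      rw [Finsupp.filter_sum]
      refine Finset.sum_congr rfl fun i _ => ?_
      rw [mulExpand (H i) (F i), AddMonoidAlgebra.coeff_sum, Finsupp.filter_sum]
      rw [mulExpand (H' i) (F i), AddMonoidAlgebra.coeff_sum]
      have hsupp' : (H' i).coeff.support = (H i).coeff.support.filter
          (fun p : ((Fin n → ℤ) × (Fin r → ℕ)) => p.2 + dF i = d) := by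
        rw [hH', AddMonoidAlgebra.coeff_ofCoeff, Finsupp.support_filter]
      rw [hsupp', Finset.sum_filter]
      refine Finset.sum_congr rfl fun p hp => ?_
      by_cases hpd : p.2 + dF i = d
      · rw [if_pos hpd]
        have h1 : Finsupp.filter (fun q : ((Fin n → ℤ) × (Fin r → ℕ)) => q.2 = d)
            (AddMonoidAlgebra.single p ((H i).coeff p) * F i).coeff
            = (AddMonoidAlgebra.single p ((H i).coeff p) * F i).coeff := by
          rw [Finsupp.filter_eq_self_iff]
          intro q hq
          refine hpd ▸ hmulhom _ _ p.2 (dF i) ?_ (hFhom i) q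
            (Finsupp.mem_support_iff.2 hq)
          intro q' hq'
          have := Finsupp.support_single_subset hq'
          rw [Finset.mem_singleton] at this
          rw [this]
        rw [h1, hH', AddMonoidAlgebra.coeff_ofCoeff, Finsupp.filter_apply_pos
          (fun q : (Fin n → ℤ) × (Fin r → ℕ) => q.2 + dF i = d) (H i).coeff hpd]
      · rw [if_neg hpd]
        rw [Finsupp.filter_eq_zero_iff]
        intro q hq
        by_contra hq0
        have hq' : q ∈ (AddMonoidAlgebra.single p ((H i).coeff p) * F i).coeff.support :=
          Finsupp.mem_support_iff.2 hq0
        have : q.2 = p.2 + dF i := by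
          refine hmulhom _ _ p.2 (dF i) ?_ (hFhom i) q hq'
          intro q' hq''
          have := Finsupp.support_single_subset hq''
          rw [Finset.mem_singleton] at this
          rw [this]
        exact hpd (by rw [← this, hq])
    rw [hgeq, Fin.sum_univ_castSucc]
    refine Submodule.add_mem _ ?_ ?_
    · -- first part is in Comp d
      refine Submodule.subset_span (Or.inl ?_)
      rw [hComp]
      refine ⟨?_, fun i => H' i.castSucc, fun i => hH'S i.castSucc, rfl⟩
      intro q hq
      rw [AddMonoidAlgebra.coeff_sum] at hq
      obtain ⟨i, -, hi⟩ := Finsupp.mem_support_finset_sum q hq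
      obtain ⟨a, ha, b, hb, rfl⟩ := Finset.mem_add.1
        (AddMonoidAlgebra.support_coeff_mul_subset _ _ hi)
      rw [hH', AddMonoidAlgebra.coeff_ofCoeff, Finsupp.support_filter, Finset.mem_filter] at ha
      have h2 : (a + b).2 = a.2 + b.2 := rfl
      rw [h2, hFhom i.castSucc b hb]
      exact ha.2
    · -- last part via key lemma
      rw [mulExpandSmul]
      refine Submodule.sum_mem _ fun p hp => Submodule.smul_mem _ _ ?_
      have hpS : p ∈ S := hH'S (Fin.last k) p hp
      have hpe : p.2 = e := by
        rw [hH', AddMonoidAlgebra.coeff_ofCoeff, Finsupp.support_filter, Finset.mem_filter] at hp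
        have := hp.2
        rw [hd] at this
        exact add_right_cancel this
      exact key p hpS hpe
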